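/- Let M be a matroid on a finite linearly ordered ground set E and let B be a basis of M. Let F be the external part of B in M, i.e., the unique subset of E such that B ∩ F is a basis of M(F), Int_{M(F)}(B ∩ F) = ∅, Ext_{M(F)}(B ∩ F) = Ext_M(B), Int_{M/F}(B \ F) = Int_M(B), and Ext_{M/F}(B \ F) = ∅. Let F̂ be the external part of the basis E \ B of the dual matroid M*, defined by the same characterization applied to M* and E \ B. Then F̂ = E \ F; in other words, E is the disjoint union of the external part of B in M and the external part of E \ B in M*. -/

import Mathlib

open Matroid Set

namespace ActiveBij

variable {α : Type*}

/-- Deletion of a set of elements from a matroid. -/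
def del (M : Matroid α) (D : Set α) : Matroid α := M ↾ (M.E \ D)

/-- Contraction of a set of elements of a matroid. -/
def con (M : Matroid α) (C : Set α) : Matroid α := (del M✶ C)✶

/-- The minor `M(G)/F` : restriction to `G` followed by contraction of `F`. -/
def minor (M : Matroid α) (G F : Set α) : Matroid α := con (M ↾ G) F

/-- A circuit of a matroid : a minimal dependent set. -/
def Cct (M : Matroid α) (C : Set α) : Prop := Minimal M.Dep C

/-- A cocircuit of a matroid : a circuit of the dual. -/
def Cocct (M : Matroid α) (C : Set α) : Prop := Cct M✶ C

/-- The fundamental circuit of `e ∉ B` with respect to a base `B` :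
the unique circuit contained in `B ∪ {e}`. -/
def fundCct (M : Matroid α) (B : Set α) (e : α) : Set α :=
  ⋂₀ {C | Cct M C ∧ C ⊆ insert e B}

/-- The fundamental cocircuit of `b ∈ B` with respect to a base `B` :
the unique cocircuit contained in `(E \ B) ∪ {b}`. -/
def fundCocct (M : Matroid α) (B : Set α) (b : α) : Set α :=
  ⋂₀ {C | Cocct M C ∧ C ⊆ insert b (M.E \ B)}

/-- The set of internally active elements of a base `B` :
elements `b ∈ B` that are the minimum of their fundamental cocircuit. -/
def ActInt [LinearOrder α] (M : Matroid α) (B : Set α) : Set α :=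
  {b ∈ B | IsLeast (fundCocct M B b) b}

/-- The set of externally active elements of a base `B` :
elements `e ∈ M.E \ B` that are the minimum of their fundamental circuit. -/
def ActExt [LinearOrder α] (M : Matroid α) (B : Set α) : Set α :=
  {e ∈ M.E \ B | IsLeast (fundCct M B e) e}

/-- A uniactive internal base : internal activity `1` and external activity `0`. -/
def UIntBase [LinearOrder α] (M : Matroid α) (B : Set α) : Prop :=
  M.IsBase B ∧ (ActInt M B).ncard = 1 ∧ (ActExt M B).ncard = 0

/-- A uniactive external base : internal activity `0` and external activity `1`. -/
def UExtBase [LinearOrder α] (M : Matroid α) (B : Set α) : Prop :=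
  M.IsBase B ∧ (ActInt M B).ncard = 0 ∧ (ActExt M B).ncard = 1

/-- `β(M)` : the number of uniactive internal bases. -/
noncomputable def beta [LinearOrder α] (M : Matroid α) : ℕ :=
  {B : Set α | UIntBase M B}.ncard

/-- `β*(M)` : the number of uniactive external bases. -/
noncomputable def betaStar [LinearOrder α] (M : Matroid α) : ℕ :=
  {B : Set α | UExtBase M B}.ncard

/-- A connected matroid : any two elements of the ground set lie on a common circuit. -/
def Conn (M : Matroid α) : Prop :=
  M.E.Nonempty ∧ ∀ ⦃x y⦄, x ∈ M.E → y ∈ M.E →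
    (x = y ∨ ∃ C, Cct M C ∧ x ∈ C ∧ y ∈ C)

/-- A matroid consisting of a single loop. -/
def IsLoopMatroid (M : Matroid α) : Prop := ∃ e, M.E = {e} ∧ M.Dep {e}

/-- A matroid consisting of a single coloop (isthmus). -/
def IsColoopMatroid (M : Matroid α) : Prop := ∃ e, M.E = {e} ∧ M.Indep {e}

/-- A flat : a subset of the ground set whose complement is a union of cocircuits. -/
def IsFlat (M : Matroid α) (F : Set α) : Prop :=
  F ⊆ M.E ∧ ∃ S : Set (Set α), (∀ C ∈ S, Cocct M C) ∧ M.E \ F = ⋃₀ S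

/-- A dual-flat : a union of circuits. -/
def IsDualFlat (M : Matroid α) (F : Set α) : Prop :=
  ∃ S : Set (Set α), (∀ C ∈ S, Cct M C) ∧ F = ⋃₀ S

/-- A cyclic flat : both a flat and a dual-flat. -/
def IsCyclicFlat (M : Matroid α) (F : Set α) : Prop :=
  IsFlat M F ∧ IsDualFlat M F

/-- The data of a filtration : `∅ = F'_ε ⊂ ⋯ ⊂ F'_0 = F_c = F_0 ⊂ ⋯ ⊂ F_ι = E`. -/
structure Filtration (α : Type*) where
  ι : ℕ
  ε : ℕ
  F : Fin (ι + 1) → Set α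
  F' : Fin (ε + 1) → Set α

/-- The `k`-th internal minor `M(F_k)/F_{k-1}` induced by a filtration. -/
def intMinor (M : Matroid α) (f : Filtration α) (k : Fin f.ι) : Matroid α :=
  minor M (f.F k.succ) (f.F k.castSucc)

/-- The `k`-th external minor `M(F'_{k-1})/F'_k` induced by a filtration. -/
def extMinor (M : Matroid α) (f : Filtration α) (k : Fin f.ε) : Matroid α :=
  minor M (f.F' k.castSucc) (f.F' k.succ)

/-- The filtration property : strictly nested subsets from `∅` to `M.E` through `F_c`,
with the minima of the successive differences increasing on each side of `F_c`. -/
def IsFiltration [LinearOrder α] (M : Matroid α) (f : Filtration α) : Prop :=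
  f.F' (Fin.last f.ε) = ∅ ∧
  f.F' 0 = f.F 0 ∧
  f.F (Fin.last f.ι) = M.E ∧
  (∀ k : Fin f.ι, f.F k.castSucc ⊂ f.F k.succ) ∧
  (∀ k : Fin f.ε, f.F' k.succ ⊂ f.F' k.castSucc) ∧
  (∀ j k : Fin f.ι, j < k → ∀ a b : α,
    IsLeast (f.F j.succ \ f.F j.castSucc) a →
    IsLeast (f.F k.succ \ f.F k.castSucc) b → a < b) ∧
  (∀ j k : Fin f.ε, j < k → ∀ a b : α,
    IsLeast (f.F' j.castSucc \ f.F' j.succ) a →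
    IsLeast (f.F' k.castSucc \ f.F' k.succ) b → a < b)

/-- A connected filtration : a filtration all of whose induced internal minors are
connected and not single loops, and all of whose induced external minors are connected
and not single coloops. -/
def IsConnFiltration [LinearOrder α] (M : Matroid α) (f : Filtration α) : Prop :=
  IsFiltration M f ∧
  (∀ k : Fin f.ι, Conn (intMinor M f k) ∧ ¬ IsLoopMatroid (intMinor M f k)) ∧
  (∀ k : Fin f.ε, Conn (extMinor M f k) ∧ ¬ IsColoopMatroid (extMinor M f k))

/-- An active filtration of a base `B` : a filtration such that `B` induces a uniactive
internal base of each internal minor and a uniactive external base of each external minor. -/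
def IsActiveFiltration [LinearOrder α] (M : Matroid α) (B : Set α) (f : Filtration α) : Prop :=
  IsFiltration M f ∧
  (∀ k : Fin f.ι, UIntBase (intMinor M f k) (B ∩ (f.F k.succ \ f.F k.castSucc))) ∧
  (∀ k : Fin f.ε, UExtBase (extMinor M f k) (B ∩ (f.F' k.castSucc \ f.F' k.succ)))

/-- The subset `F(X)` attached to a base `B` and a set `X` of internally active elements :
`B ∩ F` is a base of `M(F)`, the activities of the induced bases of `M(F)` and `M/F`
split those of `B`, with `Int` of the contraction part equal to `X`. -/
def DecompSet [LinearOrder α] (M : Matroid α) (B X F : Set α) : Prop :=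
  F ⊆ M.E ∧
  (M ↾ F).IsBase (B ∩ F) ∧
  ActInt (M ↾ F) (B ∩ F) = ActInt M B \ X ∧
  ActExt (M ↾ F) (B ∩ F) = ActExt M B ∧
  ActInt (con M F) (B \ F) = X ∧
  ActExt (con M F) (B \ F) = ∅

/-- The dual of a filtration : complement every subset and exchange the two sides. -/
def dualFil (M : Matroid α) (f : Filtration α) : Filtration α :=
  ⟨f.ε, f.ι, fun k => M.E \ f.F' k, fun k => M.E \ f.F k⟩

/-- The set of subsets occurring in a filtration. -/
def termsOf (f : Filtration α) : Set (Set α) :=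
  {H | ∃ k, f.F k = H} ∪ {H | ∃ k, f.F' k = H}

end ActiveBij

namespace ActiveBij

section Aux

variable {α : Type*} {M : Matroid α} {B F G C D J J₁ : Set α} {a e x : α}

lemma con_ground' (M : Matroid α) (G : Set α) : (con M G).E = M.E \ G := rfl

lemma exists_isLeast' [LinearOrder α] {C : Set α} (hfin : C.Finite) (hne : C.Nonempty) :
    ∃ l, IsLeast C l := by
  obtain ⟨a, ha⟩ := hne
  obtain ⟨b, -, hb⟩ := hfin.exists_le_minimal ha
  refine ⟨b, hb.1, fun y hy => ?_⟩
  by_contra h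
  push_neg at h
  exact absurd (hb.2 hy h.le) h.not_ge

lemma exists_cct_subset (hfin : D.Finite) (hD : M.Dep D) : ∃ C, Cct M C ∧ C ⊆ D := by
  have hs : {X | M.Dep X ∧ X ⊆ D}.Finite :=
    (hfin.finite_subsets).subset (fun X hX => hX.2)
  obtain ⟨C, -, hC⟩ := hs.exists_le_minimal (a := D) ⟨hD, subset_rfl⟩
  exact ⟨C, ⟨hC.1.1, fun Y hY hYC => hC.2 ⟨hY, hYC.trans hC.1.2⟩ hYC⟩, hC.1.2⟩

lemma Cct.dep' (h : Cct M C) : M.Dep C := h.1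

lemma Cct.mem_closure_diff (h : Cct M C) (he : e ∈ C) : e ∈ M.closure (C \ {e}) := by
  have hind : M.Indep (C \ {e}) := by
    by_contra hd
    have hdep : M.Dep (C \ {e}) := ⟨hd, diff_subset.trans h.1.subset_ground⟩
    exact ((h.2 hdep diff_subset) he).2 rfl
  rw [hind.mem_closure_iff]
  left
  rw [insert_diff_singleton, insert_eq_of_mem he]
  exact h.1

lemma cct_unique (hB : M.Indep B) (h1 : Cct M C) (h2 : Cct M D)
    (hC : C ⊆ insert e B) (hD : D ⊆ insert e B) : C = D := by
  have hmem : ∀ {Y : Set α}, Cct M Y → Y ⊆ insert e B → e ∈ Y := by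
    intro Y hY hYB
    by_contra he
    exact hY.1.not_indep
      (hB.subset (fun x hx => ((hYB hx).resolve_left (by rintro rfl; exact he hx))))
  have heC := hmem h1 hC
  have heD := hmem h2 hD
  by_contra hne
  have hCD : ¬ C ⊆ D := fun h => hne (h.antisymm (h2.2 h1.1 h))
  obtain ⟨x, hxC, hxD⟩ := not_subset.mp hCD
  have hxe : x ≠ e := fun h => hxD (h ▸ heD)
  set A := (C ∪ D) \ {e, x} with hA
  have hAB : A ⊆ B := by
    intro y hy
    refine ((union_subset hC hD) hy.1).resolve_left (fun h => hy.2 ?_)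
    simp [h]
  have hAind : M.Indep A := hB.subset hAB
  have heA : e ∈ M.closure A := by
    refine M.closure_subset_closure (show D \ {e} ⊆ A from ?_) (h2.mem_closure_diff heD)
    intro y hy
    refine ⟨Or.inr hy.1, ?_⟩
    simp only [mem_insert_iff, mem_singleton_iff, not_or]
    exact ⟨fun h => hy.2 (by simp [h]), fun h => hxD (h ▸ hy.1)⟩
  have hxcl : x ∈ M.closure A := by
    have h1c := h1.mem_closure_diff hxC
    have hsub : C \ {x} ⊆ insert e A := by
      intro y hy
      rcases eq_or_ne y e with rfl | hye
      · exact mem_insert _ _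
      · refine mem_insert_of_mem _ ⟨Or.inl hy.1, ?_⟩
        simp only [mem_insert_iff, mem_singleton_iff, not_or]
        exact ⟨hye, fun h => hy.2 (by simp [h])⟩
    have hx' : x ∈ M.closure (insert e A) := M.closure_subset_closure hsub h1c
    rwa [closure_insert_eq_of_mem_closure heA] at hx'
  have hxB : x ∈ B := (hC hxC).resolve_left hxe
  have hxA : x ∉ A := fun h => h.2 (by simp)
  have hins : M.Indep (insert x A) := hB.subset (insert_subset hxB hAB)
  exact (hAind.notMem_closure_iff_of_notMem hxA (hB.subset_ground hxB)).mpr hins hxcl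

lemma fundCct_eq (hB : M.Indep B) (hC : Cct M C) (hCB : C ⊆ insert e B) :
    fundCct M B e = C := by
  have hset : {C' | Cct M C' ∧ C' ⊆ insert e B} = {C} := by
    ext Y
    simp only [mem_setOf_eq, mem_singleton_iff]
    exact ⟨fun h => cct_unique hB h.1 hC h.2 hCB, fun h => h ▸ ⟨hC, hCB⟩⟩
  rw [fundCct, hset, sInter_singleton]

lemma cct_restrict (hF : F ⊆ M.E) (h : Cct (M ↾ F) C) : Cct M C ∧ C ⊆ F := by
  have hd := h.1
  rw [restrict_dep_iff] at hd
  exact ⟨⟨⟨hd.1, hd.2.trans hF⟩,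
    fun Y hY hYC => h.2 (restrict_dep_iff.mpr ⟨hY.not_indep, hYC.trans hd.2⟩) hYC⟩, hd.2⟩

lemma con_eq_dual (M : Matroid α) (G : Set α) : con M G = (M✶ ↾ (M.E \ G))✶ := rfl

lemma con_base (hB : M.IsBase B) (hBG : M.IsBasis (B ∩ G) G) : (con M G).IsBase (B \ G) := by
  rw [con_eq_dual, dual_isBase_iff']
  have hgr : (M✶ ↾ (M.E \ G)).E = M.E \ G := rfl
  rw [hgr]
  refine ⟨?_, fun x hx => ⟨hB.subset_ground hx.1, hx.2⟩⟩
  rw [isBase_restrict_iff (show M.E \ G ⊆ M✶.E from diff_subset)]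
  have hset : (M.E \ G) \ (B \ G) = (M.E \ B) ∩ (M.E \ G) := by
    ext y; simp only [mem_diff, mem_inter_iff, not_and, not_not]; tauto
  rw [hset]
  exact hB.compl_inter_isBasis_of_inter_isBasis hBG

lemma con_indep_elim (hG : G ⊆ M.E) (h : (con M G).Indep D) :
    ∃ B₀, M.IsBase B₀ ∧ D ⊆ B₀ ∧ M.IsBasis (B₀ ∩ G) G := by
  rw [con_eq_dual, dual_indep_iff_exists'] at h
  obtain ⟨hDsub, B', hB', hdisj⟩ := h
  rw [isBase_restrict_iff (show M.E \ G ⊆ M✶.E from diff_subset)] at hB'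
  obtain ⟨Bd, hBd, rfl⟩ := hB'.exists_isBase
  have hBdE : Bd ⊆ M.E := hBd.subset_ground
  refine ⟨M.E \ Bd, hBd.compl_isBase_of_dual, ?_, ?_⟩
  · intro x hx
    have hxE : x ∈ M.E \ G := hDsub hx
    exact ⟨hxE.1, fun hxB => (disjoint_left.mp hdisj hx) ⟨hxB, hxE⟩⟩
  · rw [(hBd.compl_isBase_of_dual).inter_isBasis_iff_compl_inter_isBasis_dual hG]
    rwa [diff_diff_cancel_left hBdE]

lemma indep_union_basis (hfin : (D ∪ G).Finite) (hDE : D ⊆ M.E)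
    (hJ1 : M.IsBasis J₁ G) (hJ : M.IsBasis J G) (hDG : Disjoint D G)
    (h : M.Indep (D ∪ J₁)) : M.Indep (D ∪ J) := by
  have hG : G ⊆ M.E := hJ1.subset_ground
  have hb1 : M.IsBasis (D ∪ J₁) (D ∪ G) := by
    refine h.isBasis_of_subset_of_subset_closure (union_subset_union_right D hJ1.subset) ?_
    refine union_subset ?_ (hJ1.subset_closure.trans
      (M.closure_subset_closure subset_union_right))
    exact subset_union_left.trans (M.subset_closure (D ∪ J₁) h.subset_ground)
  obtain ⟨K, hK, hJK⟩ := hJ.indep.subset_isBasis_of_subset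
    (hJ.subset.trans subset_union_right) (union_subset hDE hG)
  have hKG : K ∩ G = J :=
    (hJ.eq_of_subset_indep (hK.indep.subset inter_subset_left)
      (subset_inter hJK hJ.subset) inter_subset_right).symm
  have hcard : K.encard = (D ∪ J₁).encard := hK.encard_eq_encard hb1
  have hdisj1 : Disjoint D J₁ := hDG.mono_right hJ1.subset
  have h1 : (D ∪ J₁).encard = D.encard + J₁.encard := encard_union_eq hdisj1
  have hKsplit : K = (K \ G) ∪ J := by rw [← hKG]; exact (diff_union_inter K G).symm
  have h2 : K.encard = (K \ G).encard + J.encard := by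
    nth_rewrite 1 [hKsplit]
    exact encard_union_eq (disjoint_sdiff_left.mono_right hJ.subset)
  have hJJ1 : J₁.encard = J.encard := hJ1.encard_eq_encard hJ
  have hKGD : K \ G ⊆ D := fun x hx => (hK.subset hx.1).resolve_right hx.2
  have hJfin : J.Finite := hfin.subset (hJ.subset.trans subset_union_right)
  have hcard2 : (K \ G).encard = D.encard := by
    have hh : (K \ G).encard + J.encard = D.encard + J.encard := by
      rw [← h2, hcard, h1, hJJ1]
    exact WithTop.add_right_cancel hJfin.encard_lt_top.ne hh
  have hKGeq : K \ G = D :=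
    (hfin.subset subset_union_left).eq_of_subset_of_encard_le' hKGD hcard2.symm.le
  have : D ∪ J = K := by rw [hKsplit, hKGeq]
  exact this ▸ hK.indep

lemma con_dep (hE : M.E.Finite) (hJ : M.IsBasis J G) (hD : D ⊆ M.E \ G)
    (hdep : M.Dep (D ∪ J)) : (con M G).Dep D := by
  have hG : G ⊆ M.E := hJ.subset_ground
  refine ⟨fun hind => ?_, hD⟩
  obtain ⟨B₀, hB₀, hDB₀, hbasis⟩ := con_indep_elim hG hind
  have hind1 : M.Indep (D ∪ (B₀ ∩ G)) :=
    hB₀.indep.subset (union_subset hDB₀ inter_subset_left)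
  have hDG : Disjoint D G := disjoint_left.mpr (fun x hx => (hD hx).2)
  have hfin : (D ∪ G).Finite := hE.subset (union_subset (hD.trans diff_subset) hG)
  exact hdep.not_indep (indep_union_basis hfin (hD.trans diff_subset) hbasis hJ hDG hind1)

/-- The part of the decomposition conditions needed for uniqueness. -/
def Q [LinearOrder α] (M : Matroid α) (B F : Set α) : Prop :=
  F ⊆ M.E ∧ (M ↾ F).IsBase (B ∩ F) ∧ ActInt (M ↾ F) (B ∩ F) = ∅ ∧
    ActExt (con M F) (B \ F) = ∅

lemma keyStep [LinearOrder α] (hE : M.E.Finite) (hB : M.IsBase B)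
    (hQF : Q M B F) (hQG : Q M B G) (haF : a ∈ F) (haG : a ∉ G) (haB : a ∉ B) :
    ∃ l, l < a ∧ l ∈ F \ G := by
  have hFE : F ⊆ M.E := hQF.1
  have hGE : G ⊆ M.E := hQG.1
  have hBE : B ⊆ M.E := hB.subset_ground
  have haE : a ∈ M.E := hFE haF
  -- a circuit of M inside `insert a (B ∩ F)`, contained in F
  have hdep0 : (M ↾ F).Dep (insert a (B ∩ F)) :=
    hQF.2.1.insert_dep ⟨haF, fun h => haB h.1⟩
  obtain ⟨C₀, hC₀, hsub0⟩ := exists_cct_subset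
    (hE.subset (insert_subset haE (inter_subset_left.trans hBE))) hdep0
  obtain ⟨hCcct, hCF⟩ := cct_restrict hFE hC₀
  have hCsub : C₀ ⊆ insert a (B ∩ F) := hsub0
  have haC0 : a ∈ C₀ := by
    by_contra h
    refine hCcct.1.not_indep (hB.indep.subset (fun x hx => ?_))
    exact ((hCsub hx).resolve_left (by rintro rfl; exact h hx)).1
  -- push it into the contraction by G
  have hBGbasis : M.IsBasis (B ∩ G) G := (isBase_restrict_iff hGE).mp hQG.2.1
  have hDsub : C₀ \ G ⊆ M.E \ G := fun x hx => ⟨hFE (hCF hx.1), hx.2⟩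
  have hCsub' : C₀ ⊆ (C₀ \ G) ∪ (B ∩ G) := by
    intro x hx
    by_cases hxG : x ∈ G
    · refine Or.inr ⟨?_, hxG⟩
      rcases hCsub hx with rfl | hxB
      · exact absurd hxG haG
      · exact hxB.1
    · exact Or.inl ⟨hx, hxG⟩
  have hdep2 : M.Dep ((C₀ \ G) ∪ (B ∩ G)) :=
    hCcct.1.superset hCsub' (union_subset (hDsub.trans diff_subset)
      (inter_subset_left.trans hBE))
  have hcondep : (con M G).Dep (C₀ \ G) := con_dep hE hBGbasis hDsub hdep2
  obtain ⟨C', hC', hsubC'⟩ := exists_cct_subset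
    (hE.subset ((diff_subset.trans hCF).trans hFE)) hcondep
  have hBaseCon : (con M G).IsBase (B \ G) := con_base hB hBGbasis
  have hC'sub : C' ⊆ insert a (B \ G) := by
    intro x hx
    have hx' := hsubC' hx
    rcases hCsub hx'.1 with rfl | hxB
    · exact mem_insert _ _
    · exact mem_insert_of_mem _ ⟨hxB.1, hx'.2⟩
  have haC' : a ∈ C' := by
    by_contra h
    refine hC'.1.not_indep (hBaseCon.indep.subset (fun x hx => ?_))
    exact (hC'sub hx).resolve_left (by rintro rfl; exact h hx)
  have hfund : fundCct (con M G) (B \ G) a = C' := fundCct_eq hBaseCon.indep hC' hC'sub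
  have hnleast : ¬ IsLeast C' a := by
    intro hl
    have hmem : a ∈ ActExt (con M G) (B \ G) :=
      ⟨⟨(⟨haE, haG⟩ : a ∈ M.E \ G), fun h => haB h.1⟩, hfund ▸ hl⟩
    rw [hQG.2.2.2] at hmem
    exact hmem
  obtain ⟨l, hl⟩ := exists_isLeast' (hE.subset (fun x hx => hFE (hCF (hsubC' hx).1)))
    ⟨a, haC'⟩
  have hla : l < a := lt_of_le_of_ne (hl.2 haC') (fun h => hnleast (h ▸ hl))
  exact ⟨l, hla, hCF (hsubC' hl.1).1, (hsubC' hl.1).2⟩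

lemma fundCocct_eq_dual (M : Matroid α) (B : Set α) (b : α) :
    fundCocct M B b = fundCct M✶ (M.E \ B) b := rfl

lemma actExt_dual [LinearOrder α] (hB : B ⊆ M.E) : ActExt M✶ (M.E \ B) = ActInt M B := by
  have h1 : M✶.E \ (M.E \ B) = B := by rw [dual_ground, diff_diff_cancel_left hB]
  ext x
  simp only [ActExt, ActInt, mem_setOf_eq, h1, ← fundCocct_eq_dual]

lemma actInt_dual [LinearOrder α] (hB : B ⊆ M.E) : ActInt M✶ (M.E \ B) = ActExt M B := by
  have h1 : M✶.E \ (M.E \ B) = B := by rw [dual_ground, diff_diff_cancel_left hB]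
  ext x
  simp only [ActInt, ActExt, mem_setOf_eq, fundCocct, fundCct, Cocct, dual_dual, h1]

lemma Qdual [LinearOrder α] (hB : M.IsBase B) (h : Q M B F) :
    Q M✶ (M.E \ B) (M.E \ F) := by
  obtain ⟨hFE, hbase, hint, hext⟩ := h
  have hBE := hB.subset_ground
  have hbasis : M.IsBasis (B ∩ F) F := (isBase_restrict_iff hFE).mp hbase
  refine ⟨diff_subset, ?_, ?_, ?_⟩
  · rw [isBase_restrict_iff (show M.E \ F ⊆ M✶.E from diff_subset)]
    exact hB.compl_inter_isBasis_of_inter_isBasis hbasis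
  · have hMrw : M✶ ↾ (M.E \ F) = (con M F)✶ := by
      rw [con_eq_dual, dual_dual]
    have hset : (M.E \ B) ∩ (M.E \ F) = (con M F).E \ (B \ F) := by
      rw [con_ground']
      ext x
      simp only [mem_inter_iff, mem_diff]
      tauto
    rw [hMrw, hset, actInt_dual (show B \ F ⊆ (con M F).E from
      fun x hx => ⟨hBE hx.1, hx.2⟩), hext]
  · have hMrw2 : con M✶ (M.E \ F) = (M ↾ F)✶ := by
      rw [con_eq_dual]
      congr 1
      rw [dual_dual, dual_ground, diff_diff_cancel_left hFE]
    have hset : (M.E \ B) \ (M.E \ F) = (M ↾ F).E \ (B ∩ F) := by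
      ext x
      simp only [mem_diff, restrict_ground_eq, mem_inter_iff]
      constructor
      · rintro ⟨⟨hxE, hxB⟩, hx2⟩
        have hxF : x ∈ F := by by_contra h; exact hx2 ⟨hxE, h⟩
        exact ⟨hxF, fun h => hxB h.1⟩
      · rintro ⟨hxF, hxB⟩
        exact ⟨⟨hFE hxF, fun h => hxB ⟨h, hxF⟩⟩, fun h => h.2 hxF⟩
    rw [hMrw2, hset, actExt_dual (show B ∩ F ⊆ (M ↾ F).E from inter_subset_right), hint]

lemma keyStep' [LinearOrder α] (hE : M.E.Finite) (hB : M.IsBase B)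
    (hQF : Q M B F) (hQG : Q M B G) (haF : a ∈ F) (haG : a ∉ G) :
    ∃ l, l < a ∧ l ∈ F \ G := by
  by_cases haB : a ∈ B
  · obtain ⟨l, hla, hl⟩ := keyStep (M := M✶) hE hB.compl_isBase_dual
      (Qdual hB hQG) (Qdual hB hQF) (a := a)
      ⟨hQF.1 haF, haG⟩ (fun h => h.2 haF) (fun h => h.2 haB)
    refine ⟨l, hla, ?_, hl.1.2⟩
    by_contra hlF
    exact hl.2 ⟨hl.1.1, hlF⟩
  · exact keyStep hE hB hQF hQG haF haG haB

lemma Q_unique [LinearOrder α] (hE : M.E.Finite) (hB : M.IsBase B)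
    (hF : Q M B F) (hG : Q M B G) : F = G := by
  by_contra hne
  have hS : ((F \ G) ∪ (G \ F)).Nonempty := by
    rw [nonempty_iff_ne_empty]
    intro h
    rw [union_empty_iff] at h
    exact hne ((diff_eq_empty.mp h.1).antisymm (diff_eq_empty.mp h.2))
  have hSfin : ((F \ G) ∪ (G \ F)).Finite :=
    hE.subset (union_subset (diff_subset.trans hF.1) (diff_subset.trans hG.1))
  obtain ⟨m, hm⟩ := exists_isLeast' hSfin hS
  rcases hm.1 with hmem | hmem
  · obtain ⟨l, hla, hl⟩ := keyStep' hE hB hF hG hmem.1 hmem.2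
    exact absurd (hm.2 (Or.inl hl)) hla.not_ge
  · obtain ⟨l, hla, hl⟩ := keyStep' hE hB hG hF hmem.1 hmem.2
    exact absurd (hm.2 (Or.inr hl)) hla.not_ge

end Aux
end ActiveBij


namespace ActiveBij

/-- The external part of the base `E \ B` of the dual matroid is the complement of the
external part of the base `B` of `M`. -/
theorem stmt6 {α : Type*} [LinearOrder α] (M : Matroid α) [M.Finite]
    (B : Set α) (hB : M.IsBase B) (F Fhat : Set α)
    (hF : DecompSet M B (ActInt M B) F)
    (hFhat : DecompSet M✶ (M.E \ B) (ActInt M✶ (M.E \ B)) Fhat) :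
    Fhat = M.E \ F := by
  have hE : M.E.Finite := M.ground_finite
  have hBE := hB.subset_ground
  have hQF : Q M B F := ⟨hF.1, hF.2.1, by
    have h := hF.2.2.1; rwa [Set.diff_self] at h, hF.2.2.2.2.2⟩
  have hQhat : Q M✶ (M.E \ B) Fhat := ⟨hFhat.1, hFhat.2.1, by
    have h := hFhat.2.2.1; rwa [Set.diff_self] at h, hFhat.2.2.2.2.2⟩
  have hQ2 : Q M B (M.E \ Fhat) := by
    have h := Qdual hB.compl_isBase_dual hQhat
    rwa [dual_dual, dual_ground, Set.diff_diff_cancel_left hBE] at h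
  have hFeq : F = M.E \ Fhat := Q_unique hE hB hQF hQ2
  rw [hFeq, Set.diff_diff_cancel_left (show Fhat ⊆ M.E from hFhat.1)]

end ActiveBij
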